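/- Let x and y be p-strings both starting with p-symbols, let e = lcp∞(⟨x[2..]⟩,⟨y[2..]⟩), and suppose fce(x) ≤ e and fce(x) < fce(y). Then ⟨x⟩ < ⟨y⟩, lcp(⟨x⟩,⟨y⟩) = h where h is the position of the first occurrence of x[1] in x[2..], and lcp∞(⟨x⟩,⟨y⟩) = fce(x). (This holds regardless of whether ⟨x[2..]⟩ < ⟨y[2..]⟩ or the reverse, by symmetry of the e ≥ fce condition.) -/

import Mathlib

/-- Symbols of a parameterized string: static symbols `s a` (from Σs) and
parameter symbols `p a` (from Σp). -/
inductive PSym where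
  | s : ℕ → PSym
  | p : ℕ → PSym
deriving DecidableEq

/-- Symbols of a p-encoded string: static symbols, finite distances, and ∞. -/
inductive Enc where
  | s : ℕ → Enc
  | fin : ℕ → Enc
  | inf : Enc
deriving DecidableEq

/-- Order embedding: static symbols < natural numbers < ∞. -/
def Enc.toPair : Enc → ℕ ×ₗ ℕ
  | .s a => toLex (0, a)
  | .fin d => toLex (1, d)
  | .inf => toLex (2, 0)

instance : LinearOrder Enc :=
  LinearOrder.lift' Enc.toPair (by
    rintro (a | a | _) (b | b | _) h <;>
      simp_all [Enc.toPair, toLex_inj, Prod.ext_iff])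

/-- Largest position `j < i` (0-based) carrying the same symbol as position `i`. -/
def prevOcc (w : List PSym) (i : ℕ) : Option ℕ :=
  ((List.range i).filter (fun j => w[j]? = w[i]?)).max?

/-- The p-encoding of position `i` (0-based) of `w`. -/
def pencSym (w : List PSym) (i : ℕ) : Enc :=
  match w[i]? with
  | some (PSym.s a) => Enc.s a
  | some (PSym.p _) =>
    match prevOcc w i with
    | some j => Enc.fin (i - j)
    | none => Enc.inf
  | none => Enc.inf

/-- The p-encoding ⟨w⟩ of a p-string `w`. -/
def penc (w : List PSym) : List Enc :=
  (List.range w.length).map (pencSym w)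

/-- Lexicographic (strict) order on p-encoded strings. -/
def lexLt (x y : List Enc) : Prop := List.Lex (· < ·) x y

def lexLe (x y : List Enc) : Prop := lexLt x y ∨ x = y

/-- Length of the longest common prefix. -/
def lcp {α : Type*} [DecidableEq α] : List α → List α → ℕ
  | a :: x, b :: y => if a = b then lcp x y + 1 else 0
  | _, _ => 0

/-- Number of ∞'s in the longest common prefix of two p-encoded strings. -/
def lcpInf (x y : List Enc) : ℕ := (x.take (lcp x y)).count Enc.inf

/-- Number of distinct p-symbols occurring in `w` (denoted |w|_p). -/
def distinctP (w : List PSym) : ℕ :=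
  (w.filterMap (fun s => match s with | PSym.p a => some a | PSym.s _ => none)).dedup.length

/-- For `w` starting with a p-symbol: the rank of `w[1]` among the distinct
p-symbols of `w[1..h+1]`, where `h+1 = min{|w|, second occurrence of w[1] in w}`. -/
def fceRank (w : List PSym) : ℕ :=
  match w with
  | [] => 0
  | c :: rest => distinctP ((c :: rest).take (min (c :: rest).length (2 + rest.idxOf c)))

/-- The function fce from the paper; `fce ε = $` is modelled as `Enc.s 0`. -/
def fce (w : List PSym) : Enc :=
  match w with
  | [] => Enc.s 0
  | PSym.s a :: _ => Enc.s a
  | w => Enc.fin (fceRank w)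

open List

lemma max?_map_succ (l : List ℕ) : (l.map Nat.succ).max? = l.max?.map Nat.succ := by
  induction l with
  | nil => rfl
  | cons a l ih =>
    simp only [map_cons, max?_cons, ih]
    cases l.max? <;> simp [Nat.succ_max_succ]

lemma prevOcc_eq_none_of (w : List PSym) (i : ℕ)
    (h : ∀ j < i, w[j]? ≠ w[i]?) : prevOcc w i = none := by
  unfold prevOcc
  have : (List.range i).filter (fun j => w[j]? = w[i]?) = [] := by
    rw [List.filter_eq_nil_iff]
    intro j hj
    simp only [decide_eq_true_eq]
    exact h j (List.mem_range.mp hj)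
  rw [this]; rfl

lemma prevOcc_cons (c : PSym) (w : List PSym) (i : ℕ)
    (hc : w[i]? ≠ some c) :
    prevOcc (c :: w) (i+1) = (prevOcc w i).map Nat.succ := by
  unfold prevOcc
  have h1 : ∀ j : ℕ, (c :: w)[j+1]? = w[j]? := fun j => List.getElem?_cons_succ
  rw [List.range_succ_eq_map, List.filter_cons, List.filter_map]
  have h2 : ((fun j => decide ((c :: w)[j]? = (c :: w)[i+1]?)) ∘ Nat.succ)
      = fun j => decide (w[j]? = w[i]?) := by
    funext j; simp [Function.comp, h1]
  have h0 : decide ((c :: w)[0]? = (c :: w)[i+1]?) = false := by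
    simp only [h1, List.getElem?_cons_zero, decide_eq_false_iff_not]
    exact fun hh => hc hh.symm
  rw [h2, h0, if_neg (by simp), max?_map_succ]

lemma pencSym_cons (c : PSym) (w : List PSym) (i : ℕ)
    (hc : w[i]? ≠ some c) : pencSym (c :: w) (i+1) = pencSym w i := by
  unfold pencSym
  have h1 : (c :: w)[i+1]? = w[i]? := List.getElem?_cons_succ
  rw [h1, prevOcc_cons c w i hc]
  cases hw : w[i]? with
  | none => rfl
  | some s =>
    cases s with
    | s a => rfl
    | p t =>
      cases hp : prevOcc w i with
      | none => rfl
      | some j => simp [Option.map, Nat.succ_sub_succ]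

lemma pencSym_p_zero (a : ℕ) (w : List PSym) : pencSym (PSym.p a :: w) 0 = Enc.inf := by
  unfold pencSym
  have : prevOcc (PSym.p a :: w) 0 = none := by
    unfold prevOcc; rfl
  rw [this]
  simp only [List.getElem?_cons_zero]

lemma prevOcc_second (c : PSym) (w : List PSym) (h : ℕ)
    (hh : h < w.length) (hw : w[h] = c) (hfst : ∀ j, j < h → w[j]? ≠ some c) :
    prevOcc (c :: w) (h+1) = some 0 := by
  unfold prevOcc
  have hgt : (c :: w)[h+1]? = some c := by
    rw [List.getElem?_cons_succ, List.getElem?_eq_getElem hh, hw]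
  have : (List.range (h+1)).filter (fun j => (c :: w)[j]? = (c :: w)[h+1]?) = [0] := by
    rw [List.range_succ_eq_map, List.filter_cons]
    have h0 : decide ((c :: w)[0]? = (c :: w)[h+1]?) = true := by
      simp [hgt]
    rw [h0, if_pos rfl, List.filter_map]
    have : List.filter ((fun j => decide ((c :: w)[j]? = (c :: w)[h+1]?)) ∘ Nat.succ)
        (List.range h) = [] := by
      rw [List.filter_eq_nil_iff]
      intro j hj
      have hjh : j < h := List.mem_range.mp hj
      simp only [Function.comp, hgt, List.getElem?_cons_succ, decide_eq_true_eq]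
      exact hfst j hjh
    rw [this]; rfl
  rw [this]; rfl

lemma pencSym_second (a : ℕ) (w : List PSym) (h : ℕ)
    (hh : h < w.length) (hw : w[h] = PSym.p a) (hfst : ∀ j, j < h → w[j]? ≠ some (PSym.p a)) :
    pencSym (PSym.p a :: w) (h+1) = Enc.fin (h+1) := by
  unfold pencSym
  have hgt : (PSym.p a :: w)[h+1]? = some (PSym.p a) := by
    rw [List.getElem?_cons_succ, List.getElem?_eq_getElem hh, hw]
  rw [hgt, prevOcc_second _ w h hh hw hfst]
  rfl

lemma prevOcc_take (w : List PSym) (n i : ℕ) (hi : i < n) :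
    prevOcc (w.take n) i = prevOcc w i := by
  unfold prevOcc
  congr 1
  apply List.filter_congr
  intro j hj
  have hj' : j < i := List.mem_range.mp hj
  rw [List.getElem?_take, List.getElem?_take, if_pos (by omega), if_pos hi]

lemma pencSym_take (w : List PSym) (n i : ℕ) (hi : i < n) :
    pencSym (w.take n) i = pencSym w i := by
  unfold pencSym
  rw [List.getElem?_take, if_pos hi, prevOcc_take w n i hi]

lemma penc_take (w : List PSym) (n : ℕ) (hn : n ≤ w.length) :
    (penc w).take n = (List.range n).map (pencSym w) := by
  unfold penc
  rw [← List.map_take, List.take_range, min_eq_left hn]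

lemma penc_take_eq_penc (w : List PSym) (n : ℕ) (hn : n ≤ w.length) :
    penc (w.take n) = (penc w).take n := by
  rw [penc_take w n hn]
  unfold penc
  rw [List.length_take, min_eq_left hn]
  exact List.map_congr_left fun i hi => pencSym_take w n i (List.mem_range.mp hi)

lemma penc_snoc (w : List PSym) (c : PSym) :
    penc (w ++ [c]) = penc w ++ [pencSym (w ++ [c]) w.length] := by
  unfold penc
  rw [List.length_append, List.length_singleton, List.range_succ, List.map_append,
    List.map_singleton]
  congr 1
  apply List.map_congr_left
  intro i hi
  have hi' : i < w.length := List.mem_range.mp hi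
  rw [← pencSym_take (w ++ [c]) w.length i hi', List.take_left,
    ← pencSym_take w w.length i hi', List.take_length]

def pvals (w : List PSym) : List ℕ :=
  w.filterMap (fun s => match s with | PSym.p a => some a | PSym.s _ => none)

lemma distinctP_eq (w : List PSym) : distinctP w = (pvals w).toFinset.card := by
  rw [List.card_toFinset]; rfl

lemma mem_pvals (w : List PSym) (t : ℕ) : t ∈ pvals w ↔ PSym.p t ∈ w := by
  unfold pvals
  rw [List.mem_filterMap]
  constructor
  · rintro ⟨s, hs, he⟩
    cases s with
    | s a => simp at he
    | p a => simp at he; subst he; exact hs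
  · intro h; exact ⟨PSym.p t, h, rfl⟩

lemma getElem?_append_last (w : List PSym) (c : PSym) :
    (w ++ [c])[w.length]? = some c := by
  rw [List.getElem?_append_right (le_refl _)]
  simp

lemma prevOcc_append_last_none (w : List PSym) (c : PSym) (hc : c ∉ w) :
    prevOcc (w ++ [c]) w.length = none := by
  apply prevOcc_eq_none_of
  intro j hj
  rw [getElem?_append_last, List.getElem?_append, if_pos hj]
  intro he
  exact hc (List.mem_iff_getElem?.mpr ⟨j, he⟩)

lemma prevOcc_append_last_ne_none (w : List PSym) (c : PSym) (hc : c ∈ w) :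
    prevOcc (w ++ [c]) w.length ≠ none := by
  unfold prevOcc
  intro hnone
  rw [List.max?_eq_none_iff, List.filter_eq_nil_iff] at hnone
  obtain ⟨j, hj⟩ := List.mem_iff_getElem?.mp hc
  obtain ⟨hjl, -⟩ := List.getElem?_eq_some_iff.mp hj
  have heq : (w ++ [c])[j]? = (w ++ [c])[w.length]? := by
    rw [getElem?_append_last, List.getElem?_append, if_pos hjl]
    exact hj
  exact hnone j (List.mem_range.mpr hjl) (decide_eq_true heq)

lemma pencSym_append_last_s (w : List PSym) (a : ℕ) :
    pencSym (w ++ [PSym.s a]) w.length = Enc.s a := by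
  unfold pencSym
  rw [getElem?_append_last]

lemma pencSym_append_last_p_notmem (w : List PSym) (t : ℕ) (hc : PSym.p t ∉ w) :
    pencSym (w ++ [PSym.p t]) w.length = Enc.inf := by
  unfold pencSym
  rw [getElem?_append_last, prevOcc_append_last_none w _ hc]

lemma pencSym_append_last_p_mem (w : List PSym) (t : ℕ) (hc : PSym.p t ∈ w) :
    pencSym (w ++ [PSym.p t]) w.length ≠ Enc.inf := by
  unfold pencSym
  rw [getElem?_append_last]
  cases hp : prevOcc (w ++ [PSym.p t]) w.length with
  | some j => simp
  | none => exact absurd hp (prevOcc_append_last_ne_none w _ hc)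

lemma count_inf_penc (w : List PSym) : (penc w).count Enc.inf = distinctP w := by
  induction w using List.reverseRecOn with
  | nil => rfl
  | append_singleton w c ih =>
    rw [penc_snoc, List.count_append, ih, distinctP_eq, distinctP_eq]
    have hpv : pvals (w ++ [c]) = pvals w ++ pvals [c] := List.filterMap_append ..
    rw [hpv]
    cases c with
    | s a =>
      have h1 : pvals [PSym.s a] = [] := rfl
      rw [h1, List.append_nil, List.count_singleton', pencSym_append_last_s]
      simp
    | p t =>
      have h1 : pvals [PSym.p t] = [t] := rfl
      rw [h1, List.toFinset_append, List.count_singleton']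
      have h2 : (pvals w).toFinset ∪ [t].toFinset = insert t (pvals w).toFinset := by
        have h0 : [t].toFinset = ({t} : Finset ℕ) := rfl
        rw [h0, Finset.union_comm, ← Finset.insert_eq]
      rw [h2]
      by_cases hc : PSym.p t ∈ w
      · have h3 : t ∈ (pvals w).toFinset := by rw [List.mem_toFinset, mem_pvals]; exact hc
        rw [Finset.insert_eq_self.mpr h3,
          if_neg (by exact fun he => pencSym_append_last_p_mem w t hc he)]
        simp
      · have h3 : t ∉ (pvals w).toFinset := by rw [List.mem_toFinset, mem_pvals]; exact hc
        rw [Finset.card_insert_of_notMem h3,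
          if_pos (pencSym_append_last_p_notmem w t hc)]

lemma lcp_take_eq {α : Type*} [DecidableEq α] (x y : List α) :
    x.take (lcp x y) = y.take (lcp x y) := by
  induction x generalizing y with
  | nil => simp [lcp]
  | cons a x ih =>
    cases y with
    | nil => simp [lcp]
    | cons b y =>
      by_cases hab : a = b
      · subst hab
        simp [lcp, List.take_succ_cons, ih]
      · simp [lcp, hab]

lemma lcp_eq_of {α : Type*} [DecidableEq α] (x y : List α) (n : ℕ)
    (ht : x.take n = y.take n) (hne : x[n]? ≠ y[n]?) : lcp x y = n := by
  induction n generalizing x y with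
  | zero =>
    cases x with
    | nil => cases y with
      | nil => simp at hne
      | cons b y => simp [lcp]
    | cons a x => cases y with
      | nil => simp [lcp]
      | cons b y =>
        have : a ≠ b := by
          intro h; subst h; simp at hne
        simp [lcp, this]
  | succ n ih =>
    cases x with
    | nil =>
      cases y with
      | nil => simp at hne
      | cons b y => simp at ht
    | cons a x =>
      cases y with
      | nil => simp at ht
      | cons b y =>
        simp only [List.take_succ_cons, List.cons.injEq] at ht
        obtain ⟨rfl, ht2⟩ := ht
        have hne2 : x[n]? ≠ y[n]? := by simpa using hne
        simp [lcp, ih x y ht2 hne2]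

lemma lex_of (x y : List Enc) (n : ℕ) (u v : Enc)
    (ht : x.take n = y.take n) (hx : x[n]? = some u) (hy : y[n]? = some v)
    (huv : u < v) : List.Lex (· < ·) x y := by
  induction n generalizing x y with
  | zero =>
    cases x with
    | nil => simp at hx
    | cons a x =>
      cases y with
      | nil => simp at hy
      | cons b y =>
        simp only [List.getElem?_cons_zero, Option.some.injEq] at hx hy
        subst hx; subst hy
        exact List.Lex.rel huv
  | succ n ih =>
    cases x with
    | nil => simp at hx
    | cons a x =>
      cases y with
      | nil => simp at hy
      | cons b y =>
        simp only [List.take_succ_cons, List.cons.injEq] at ht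
        obtain ⟨rfl, ht2⟩ := ht
        exact List.Lex.cons (ih x y ht2 (by simpa using hx) (by simpa using hy))

lemma enc_fin_lt_inf (d : ℕ) : Enc.fin d < Enc.inf := by
  show Enc.toPair (Enc.fin d) < Enc.toPair Enc.inf
  show toLex (1, d) < toLex (2, 0)
  exact Prod.Lex.left _ _ (by norm_num)

lemma getElem?_lcp_agree {α : Type*} [DecidableEq α] (x y : List α) (i : ℕ)
    (hi : i < lcp x y) : x[i]? = y[i]? := by
  have h := lcp_take_eq x y
  have h1 : (x.take (lcp x y))[i]? = (y.take (lcp x y))[i]? := by rw [h]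
  rwa [List.getElem?_take, List.getElem?_take, if_pos hi, if_pos hi] at h1

lemma indexOf_le_of_getElem? (w : List PSym) (c : PSym) (j : ℕ)
    (hj : w[j]? = some c) : w.idxOf c ≤ j := by
  induction w generalizing j with
  | nil => simp at hj
  | cons d w ih =>
    cases j with
    | zero =>
      simp only [List.getElem?_cons_zero, Option.some.injEq] at hj
      subst hj
      simp
    | succ j =>
      by_cases hdc : d = c
      · subst hdc; simp
      · rw [List.idxOf_cons_ne _ (by exact fun h => hdc (by simpa using h))]
        exact Nat.succ_le_succ (ih j (by simpa using hj))

lemma distinctP_cons_p_mem (t : ℕ) (l : List PSym) (h : PSym.p t ∈ l) :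
    distinctP (PSym.p t :: l) = distinctP l := by
  rw [distinctP_eq, distinctP_eq]
  have h1 : pvals (PSym.p t :: l) = t :: pvals l := rfl
  rw [h1, List.toFinset_cons, Finset.insert_eq_self.mpr (by rw [List.mem_toFinset, mem_pvals]; exact h)]

lemma distinctP_snoc_p_notmem (t : ℕ) (l : List PSym) (h : PSym.p t ∉ l) :
    distinctP (l ++ [PSym.p t]) = distinctP l + 1 := by
  rw [distinctP_eq, distinctP_eq]
  have h1 : pvals (l ++ [PSym.p t]) = pvals l ++ [t] := List.filterMap_append ..
  rw [h1, List.toFinset_append]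
  have h2 : (pvals l).toFinset ∪ [t].toFinset = insert t (pvals l).toFinset := by
    have h0 : [t].toFinset = ({t} : Finset ℕ) := rfl
    rw [h0, Finset.union_comm, ← Finset.insert_eq]
  rw [h2, Finset.card_insert_of_notMem (by rw [List.mem_toFinset, mem_pvals]; exact h)]

lemma penc_getElem? (w : List PSym) (i : ℕ) (hi : i < w.length) :
    (penc w)[i]? = some (pencSym w i) := by
  unfold penc
  rw [List.getElem?_map, List.getElem?_range hi]
  rfl

lemma length_penc (w : List PSym) : (penc w).length = w.length := by
  unfold penc; simp

lemma fceRank_eq (t : ℕ) (w : List PSym) (hmem : PSym.p t ∈ w) :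
    fceRank (PSym.p t :: w) = distinctP (w.take (w.idxOf (PSym.p t))) + 1 := by
  have hhl : w.idxOf (PSym.p t) < w.length := List.idxOf_lt_length_iff.mpr hmem
  set h := w.idxOf (PSym.p t) with hh
  have hfst : ∀ j, j < h → w[j]? ≠ some (PSym.p t) := fun j hj he =>
    absurd (indexOf_le_of_getElem? w _ j he) (by omega)
  have hgh : w[h]? = some (PSym.p t) := by
    rw [List.getElem?_eq_getElem hhl]
    exact congrArg some (List.getElem_idxOf hhl)
  have h1 : fceRank (PSym.p t :: w)
      = distinctP ((PSym.p t :: w).take (min (w.length + 1) (2 + h))) := rfl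
  rw [h1, min_eq_right (by omega)]
  have h2 : (PSym.p t :: w).take (2 + h) = PSym.p t :: w.take (h+1) := by
    have he2 : 2 + h = (h+1) + 1 := by omega
    rw [he2, List.take_succ_cons]
  rw [h2]
  have htk1 : w.take (h+1) = w.take h ++ [PSym.p t] := by
    rw [List.take_succ, hgh]; rfl
  have hmem1 : PSym.p t ∈ w.take (h+1) := by
    rw [htk1]; exact List.mem_append_right _ (List.mem_singleton_self _)
  have hnmem : PSym.p t ∉ w.take h := by
    intro hc
    obtain ⟨j, hj⟩ := List.mem_iff_getElem?.mp hc
    rw [List.getElem?_take] at hj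
    by_cases hjh : j < h
    · rw [if_pos hjh] at hj; exact hfst j hjh hj
    · rw [if_neg hjh] at hj; simp at hj
  rw [distinctP_cons_p_mem t _ hmem1, htk1, distinctP_snoc_p_notmem t _ hnmem]

lemma penc_getElem?_indexOf (t : ℕ) (w : List PSym) (hmem : PSym.p t ∈ w) :
    (penc w)[w.idxOf (PSym.p t)]? = some Enc.inf := by
  have hhl : w.idxOf (PSym.p t) < w.length := List.idxOf_lt_length_iff.mpr hmem
  set h := w.idxOf (PSym.p t) with hh
  have hfst : ∀ j, j < h → w[j]? ≠ some (PSym.p t) := fun j hj he =>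
    absurd (indexOf_le_of_getElem? w _ j he) (by omega)
  have hgh : w[h]? = some (PSym.p t) := by
    rw [List.getElem?_eq_getElem hhl]
    exact congrArg some (List.getElem_idxOf hhl)
  rw [penc_getElem? w h hhl]
  congr 1
  unfold pencSym
  rw [hgh, prevOcc_eq_none_of w h (fun j hj => by rw [hgh]; exact hfst j hj)]

lemma count_take_indexOf (t : ℕ) (w : List PSym) (hmem : PSym.p t ∈ w) :
    ((penc w).take (w.idxOf (PSym.p t) + 1)).count Enc.inf = fceRank (PSym.p t :: w) := by
  have hhl : w.idxOf (PSym.p t) < w.length := List.idxOf_lt_length_iff.mpr hmem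
  rw [List.take_succ, penc_getElem?_indexOf t w hmem, List.count_append,
    ← penc_take_eq_penc w _ hhl.le, count_inf_penc, fceRank_eq t w hmem]
  simp

lemma penc_cons_take (c : PSym) (w : List PSym) (n : ℕ) (hn : n ≤ w.length)
    (hfst : ∀ j, j < n → w[j]? ≠ some c) (hc : ∃ t, c = PSym.p t) :
    (penc (c :: w)).take (n+1) = Enc.inf :: (penc w).take n := by
  rw [penc_take _ (n+1) (by rw [List.length_cons]; omega), penc_take _ n hn,
    List.range_succ_eq_map, List.map_cons]
  congr 1
  · obtain ⟨t, rfl⟩ := hc; exact pencSym_p_zero t w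
  · rw [List.map_map]
    apply List.map_congr_left
    intro i hi
    exact pencSym_cons c w i (hfst i (List.mem_range.mp hi))

/-- Case (B2): both strings start with p-symbols, e = lcp∞(⟨x[2..]⟩,⟨y[2..]⟩),
fce(x) ≤ e and fce(x) < fce(y).  Then ⟨x⟩ < ⟨y⟩, lcp(⟨x⟩,⟨y⟩) = h where `h` is
the (1-based) first occurrence position of x[1] in x[2..], and
lcp∞(⟨x⟩,⟨y⟩) = fce(x); no order assumption on the tails is needed. -/
theorem stmt7 (a b : ℕ) (xs ys : List PSym)
    (e : ℕ) (he : e = lcpInf (penc xs) (penc ys))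
    (hmem : PSym.p a ∈ xs)
    (hle : fceRank (PSym.p a :: xs) ≤ e)
    (hlt : fceRank (PSym.p a :: xs) < fceRank (PSym.p b :: ys)) :
    lexLt (penc (PSym.p a :: xs)) (penc (PSym.p b :: ys)) ∧
    lcp (penc (PSym.p a :: xs)) (penc (PSym.p b :: ys)) =
      xs.idxOf (PSym.p a) + 1 ∧
    lcpInf (penc (PSym.p a :: xs)) (penc (PSym.p b :: ys)) =
      fceRank (PSym.p a :: xs) := by
  have hhl : xs.idxOf (PSym.p a) < xs.length := List.idxOf_lt_length_iff.mpr hmem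
  set h := xs.idxOf (PSym.p a) with hh_def
  have hfst : ∀ j, j < h → xs[j]? ≠ some (PSym.p a) := fun j hj he2 =>
    absurd (indexOf_le_of_getElem? xs _ j he2) (by omega)
  have hr : fceRank (PSym.p a :: xs) = distinctP (xs.take h) + 1 := fceRank_eq a xs hmem
  have hcount_h : ((penc xs).take h).count Enc.inf = distinctP (xs.take h) := by
    rw [← penc_take_eq_penc xs h hhl.le, count_inf_penc]
  have hpxs_h : (penc xs)[h]? = some Enc.inf := penc_getElem?_indexOf a xs hmem
  have hcount_h1 : ((penc xs).take (h+1)).count Enc.inf = fceRank (PSym.p a :: xs) :=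
    count_take_indexOf a xs hmem
  -- lcp of tails is at least h+1
  have hm : h + 1 ≤ lcp (penc xs) (penc ys) := by
    by_contra hcon
    push_neg at hcon
    have hmle : lcp (penc xs) (penc ys) ≤ h := by omega
    have h1 : e ≤ distinctP (xs.take h) := by
      rw [he]
      unfold lcpInf
      rw [← hcount_h]
      have h2 : (penc xs).take (lcp (penc xs) (penc ys))
          = ((penc xs).take h).take (lcp (penc xs) (penc ys)) := by
        rw [List.take_take, min_eq_left hmle]
      rw [h2]
      exact List.Sublist.count_le _ (List.take_sublist _ _)
    omega
  have htake : (penc xs).take (h+1) = (penc ys).take (h+1) := by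
    have h0 := lcp_take_eq (penc xs) (penc ys)
    have h1 : (penc xs).take (h+1)
        = ((penc xs).take (lcp (penc xs) (penc ys))).take (h+1) := by
      rw [List.take_take, min_eq_left hm]
    have h2 : (penc ys).take (h+1)
        = ((penc ys).take (lcp (penc xs) (penc ys))).take (h+1) := by
      rw [List.take_take, min_eq_left hm]
    rw [h1, h2, h0]
  have hpys_h : (penc ys)[h]? = some Enc.inf := by
    have h1 : ((penc xs).take (h+1))[h]? = ((penc ys).take (h+1))[h]? := by rw [htake]
    rw [List.getElem?_take, List.getElem?_take, if_pos (Nat.lt_succ_self h),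
      if_pos (Nat.lt_succ_self h), hpxs_h] at h1
    exact h1.symm
  have hylen : h < ys.length := by
    obtain ⟨h1, -⟩ := List.getElem?_eq_some_iff.mp hpys_h
    rwa [length_penc] at h1
  -- no occurrence of p b among ys[0..h]
  have hbfst : ∀ j, j ≤ h → ys[j]? ≠ some (PSym.p b) := by
    intro j hj he2
    have hbmem : PSym.p b ∈ ys := List.mem_iff_getElem?.mpr ⟨j, he2⟩
    have hkj : ys.idxOf (PSym.p b) ≤ j := indexOf_le_of_getElem? ys _ j he2
    have h3 : ((penc ys).take (ys.idxOf (PSym.p b) + 1)).count Enc.inf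
        = fceRank (PSym.p b :: ys) := count_take_indexOf b ys hbmem
    have h4 : (penc ys).take (ys.idxOf (PSym.p b) + 1)
        = ((penc xs).take (h+1)).take (ys.idxOf (PSym.p b) + 1) := by
      rw [htake, List.take_take, min_eq_left (by omega)]
    have h5 : fceRank (PSym.p b :: ys) ≤ fceRank (PSym.p a :: xs) := by
      rw [← h3, h4, ← hcount_h1]
      exact List.Sublist.count_le _ (List.take_sublist _ _)
    omega
  -- the two encodings around position h+1
  have hAtake : (penc (PSym.p a :: xs)).take (h+1) = Enc.inf :: (penc xs).take h :=
    penc_cons_take _ xs h hhl.le hfst ⟨a, rfl⟩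
  have hBtake : (penc (PSym.p b :: ys)).take (h+1) = Enc.inf :: (penc ys).take h :=
    penc_cons_take _ ys h hylen.le (fun j hj => hbfst j (by omega)) ⟨b, rfl⟩
  have htakeh : (penc xs).take h = (penc ys).take h := by
    have h1 : ((penc xs).take (h+1)).take h = ((penc ys).take (h+1)).take h := by
      rw [htake]
    simpa [List.take_take, min_eq_left (Nat.le_succ h)] using h1
  have hAB : (penc (PSym.p a :: xs)).take (h+1) = (penc (PSym.p b :: ys)).take (h+1) := by
    rw [hAtake, hBtake, htakeh]
  have hA1 : (penc (PSym.p a :: xs))[h+1]? = some (Enc.fin (h+1)) := by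
    rw [penc_getElem? _ (h+1) (by rw [List.length_cons]; omega)]
    exact congrArg some
      (pencSym_second a xs h hhl (List.getElem_idxOf hhl) hfst)
  have hB1 : (penc (PSym.p b :: ys))[h+1]? = some Enc.inf := by
    rw [penc_getElem? _ (h+1) (by rw [List.length_cons]; omega)]
    rw [pencSym_cons _ ys h (hbfst h le_rfl)]
    have h1 := penc_getElem? ys h hylen
    rw [h1] at hpys_h
    exact hpys_h.symm ▸ rfl
  have hlcp : lcp (penc (PSym.p a :: xs)) (penc (PSym.p b :: ys)) = h + 1 :=
    lcp_eq_of _ _ (h+1) hAB (by rw [hA1, hB1]; simp)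
  refine ⟨?_, hlcp, ?_⟩
  · exact lex_of _ _ (h+1) _ _ hAB hA1 hB1 (enc_fin_lt_inf _)
  · unfold lcpInf
    rw [hlcp, hAtake, List.count_cons, hcount_h, hr]
    simp
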